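/- Let p ≥ 2 be an integer. The set {(S+2R)·ln p / ln(p^S + p^R - 1) : S, R ∈ ℕ, S, R ≥ 1} is dense in the interval [1, 3]. -/

import Mathlib

theorem stmt_15 (p : ℕ) (hp : 2 ≤ p) :
    ∀ x ∈ Set.Icc (1 : ℝ) 3, x ∈ closure
      {l : ℝ | ∃ S R : ℕ, 1 ≤ S ∧ 1 ≤ R ∧
        l = ((S : ℝ) + 2 * R) * Real.log p / Real.log ((p : ℝ) ^ S + (p : ℝ) ^ R - 1)} := by
  rintro x ⟨hx1, hx3⟩
  set t : ℝ := (x - 1) / 2 with ht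
  have hx' : x = 1 + 2 * t := by rw [ht]; ring
  have ht0 : 0 ≤ t := by rw [ht]; linarith
  have ht1 : t ≤ 1 := by rw [ht]; linarith
  have hp2 : (2:ℝ) ≤ (p:ℝ) := by exact_mod_cast hp
  have hp1 : (1:ℝ) < (p:ℝ) := by linarith
  have hlp : 0 < Real.log p := Real.log_pos hp1
  have hl2 : Real.log 2 ≤ Real.log p := Real.log_le_log (by norm_num) hp2
  set R : ℕ → ℕ := fun n => max 1 ⌊t * n⌋₊ with hR
  set f : ℕ → ℝ := fun n =>
    ((n : ℝ) + 2 * (R n : ℝ)) * Real.log p /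
      Real.log ((p : ℝ) ^ n + (p : ℝ) ^ (R n) - 1) with hf
  have key : ∀ n : ℕ, 1 ≤ n → |f n - x| ≤ 5 / n := by
    intro n hn
    have hn0 : (0:ℝ) < n := by exact_mod_cast hn
    -- bounds on R n
    have hRn : R n ≤ n := by
      have h1 : ⌊t * n⌋₊ ≤ n := by
        have : t * n ≤ (n : ℝ) := by nlinarith
        exact_mod_cast Nat.floor_le_of_le this |>.trans (by simp)
      exact max_le hn h1
    have hRlow : t * n - 1 ≤ (R n : ℝ) := by
      have := Nat.sub_one_lt_floor (t * n)
      have h2 : (⌊t * n⌋₊ : ℝ) ≤ (R n : ℝ) := by exact_mod_cast Nat.cast_le.2 (le_max_right 1 _)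
      linarith
    have hRhigh : (R n : ℝ) ≤ t * n + 1 := by
      rcases Nat.eq_zero_or_pos ⌊t * n⌋₊ with h0 | h1
      · have : R n = 1 := by rw [hR]; simp [h0]
        rw [this]
        have := mul_nonneg ht0 (le_of_lt hn0)
        simp; linarith
      · have : R n = ⌊t * n⌋₊ := max_eq_right h1
        rw [this]
        have := Nat.floor_le (mul_nonneg ht0 (le_of_lt hn0))
        linarith
    -- bounds on A
    set A : ℝ := (p : ℝ) ^ n + (p : ℝ) ^ (R n) - 1 with hA
    have hpn : (0:ℝ) < (p:ℝ) ^ n := pow_pos (by linarith) n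
    have hpR2 : (2:ℝ) ≤ (p:ℝ) ^ (R n) := by
      calc (2:ℝ) ≤ (p:ℝ) := hp2
      _ = (p:ℝ)^1 := (pow_one _).symm
      _ ≤ (p:ℝ)^(R n) := pow_le_pow_right₀ (by linarith) (le_max_left 1 _)
    have hAlow : (p:ℝ) ^ n ≤ A := by rw [hA]; linarith
    have hAhigh : A ≤ 2 * (p:ℝ) ^ n := by
      have : (p:ℝ) ^ (R n) ≤ (p:ℝ) ^ n := pow_le_pow_right₀ (by linarith) hRn
      rw [hA]; linarith
    set L : ℝ := Real.log A with hL
    have hLlow : (n : ℝ) * Real.log p ≤ L := by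
      have := Real.log_le_log hpn hAlow
      rwa [Real.log_pow] at this
    have hLhigh : L ≤ (n : ℝ) * Real.log p + Real.log 2 := by
      have := Real.log_le_log (by linarith) hAhigh
      rwa [Real.log_mul (by norm_num) (ne_of_gt hpn), Real.log_pow, add_comm] at this
    have hLpos : 0 < L := lt_of_lt_of_le (by positivity) hLlow
    -- numerator bound
    have hNe : ((n : ℝ) + 2 * (R n : ℝ)) * Real.log p - x * L
        = 2 * ((R n : ℝ) - t * n) * Real.log p - x * (L - (n:ℝ) * Real.log p) := by
      rw [hx']; ring
    have hNb : |((n : ℝ) + 2 * (R n : ℝ)) * Real.log p - x * L| ≤ 5 * Real.log p := by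
      rw [hNe]
      have h1 : |2 * ((R n : ℝ) - t * n) * Real.log p| ≤ 2 * Real.log p := by
        rw [abs_mul, abs_mul]
        have : |(R n : ℝ) - t * n| ≤ 1 := abs_le.2 ⟨by linarith, by linarith⟩
        rw [abs_of_pos hlp, abs_of_nonneg (by norm_num : (0:ℝ) ≤ 2)]
        nlinarith
      have h2 : |x * (L - (n:ℝ) * Real.log p)| ≤ 3 * Real.log 2 := by
        rw [abs_mul]
        have hxa : |x| ≤ 3 := abs_le.2 ⟨by linarith, hx3⟩
        have hla : |L - (n:ℝ) * Real.log p| ≤ Real.log 2 := abs_le.2 ⟨by linarith, by linarith⟩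
        have hl2p : 0 < Real.log 2 := Real.log_pos (by norm_num)
        nlinarith [abs_nonneg x]
      calc |2 * ((R n : ℝ) - t * n) * Real.log p - x * (L - (n:ℝ) * Real.log p)|
          ≤ |2 * ((R n : ℝ) - t * n) * Real.log p| + |x * (L - (n:ℝ) * Real.log p)| :=
            abs_sub _ _
        _ ≤ 2 * Real.log p + 3 * Real.log 2 := add_le_add h1 h2
        _ ≤ 5 * Real.log p := by linarith
    have hfe : f n - x = (((n : ℝ) + 2 * (R n : ℝ)) * Real.log p - x * L) / L := by
      have hL0 : Real.log ((p:ℝ)^n + (p:ℝ)^(R n) - 1) ≠ 0 := hLpos.ne'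
      rw [hL, hA, eq_div_iff hL0]; simp only [hf]; rw [sub_mul, div_mul_cancel₀ _ hL0]
    rw [hfe, abs_div, abs_of_pos hLpos]
    calc |((n : ℝ) + 2 * (R n : ℝ)) * Real.log p - x * L| / L
        ≤ 5 * Real.log p / ((n:ℝ) * Real.log p) :=
          div_le_div₀ (by positivity) hNb (by positivity) hLlow
      _ = 5 / n := by field_simp
  have htend : Filter.Tendsto f Filter.atTop (nhds x) := by
    rw [← tendsto_sub_nhds_zero_iff]
    apply squeeze_zero_norm' _ (tendsto_const_div_atTop_nhds_zero_nat 5)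
    filter_upwards [Filter.eventually_ge_atTop 1] with n hn
    simpa [Real.norm_eq_abs] using key n hn
  refine mem_closure_of_tendsto htend ?_
  filter_upwards [Filter.eventually_ge_atTop 1] with n hn
  exact ⟨n, R n, hn, le_max_left 1 _, rfl⟩
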